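/- If a, b ∈ ℤ³ are orthogonal vectors with ‖a‖² = ‖b‖² = N, then N is representable as a sum of two squares of integers. -/

import Mathlib

-- helper: if n*s and s are both sums of two squares (in ℕ) and s ≠ 0, then n is.
theorem aux_nat (n s : ℕ) (hs : s ≠ 0) (hns : ∃ x y : ℕ, n * s = x ^ 2 + y ^ 2)
    (hss : ∃ x y : ℕ, s = x ^ 2 + y ^ 2) : ∃ x y : ℕ, n = x ^ 2 + y ^ 2 := by
  rcases n.eq_zero_or_pos with rfl | hn
  · exact ⟨0, 0, rfl⟩
  rw [Nat.eq_sq_add_sq_iff] at *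
  intro q hq h3
  haveI : Fact q.Prime := ⟨Nat.prime_of_mem_primeFactors hq⟩
  have := hns q (Nat.mem_primeFactors.mpr ⟨Nat.prime_of_mem_primeFactors hq,
    dvd_mul_of_dvd_left (Nat.dvd_of_mem_primeFactors hq) s, Nat.mul_ne_zero hn.ne' hs⟩) h3
  rw [padicValNat.mul hn.ne' hs] at this
  have h2 : Even (padicValNat q s) := by
    by_cases hd : q ∣ s
    · exact hss q (Nat.mem_primeFactors.mpr ⟨Nat.prime_of_mem_primeFactors hq, hd, hs⟩) h3
    · rw [padicValNat.eq_zero_of_not_dvd hd]; exact Even.zero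
  rcases this with ⟨k, hk⟩
  rcases h2 with ⟨m, hm⟩
  exact ⟨k - m, by omega⟩

/-- If `a, b ∈ ℤ³` are orthogonal vectors with `‖a‖² = ‖b‖² = N > 0`, then `N`
is a sum of two squares. -/
theorem sum_two_squares_of_orthogonal_pair (N : ℤ) (hN : 0 < N)
    (a b : Fin 3 → ℤ)
    (horth : ∑ i, a i * b i = 0)
    (ha : ∑ i, (a i) ^ 2 = N) (hb : ∑ i, (b i) ^ 2 = N) :
    ∃ x y : ℤ, N = x ^ 2 + y ^ 2 := by
  simp only [Fin.sum_univ_three] at horth ha hb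
  by_cases h0 : a 0 = 0 ∧ b 0 = 0
  · exact ⟨a 1, a 2, by rw [← ha, h0.1]; ring⟩
  · set S : ℤ := (a 0) ^ 2 + (b 0) ^ 2 with hSdef
    have hSpos : 0 < S := by
      rcases not_and_or.mp h0 with h | h <;>
        rcases lt_or_gt_of_ne h with h' | h' <;> nlinarith [sq_nonneg (a 0), sq_nonneg (b 0)]
    have key : N * S = (a 2 * b 0 - a 0 * b 2) ^ 2 + (a 0 * b 1 - a 1 * b 0) ^ 2 := by
      linear_combination -(a 0) ^ 2 * hb - (b 0) ^ 2 * ha + 2 * (a 0) * (b 0) * horth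
    obtain ⟨x, y, hxy⟩ : ∃ x y : ℕ, N.toNat = x ^ 2 + y ^ 2 := by
      apply aux_nat N.toNat S.toNat
      · exact fun h => absurd (Int.toNat_eq_zero.mp h) (not_le.mpr hSpos)
      · refine ⟨(a 2 * b 0 - a 0 * b 2).natAbs, (a 0 * b 1 - a 1 * b 0).natAbs, ?_⟩
        have : ((N.toNat * S.toNat : ℕ) : ℤ) =
            (((a 2 * b 0 - a 0 * b 2).natAbs ^ 2 + (a 0 * b 1 - a 1 * b 0).natAbs ^ 2 : ℕ) : ℤ) := by
          push_cast [Int.natCast_natAbs, Int.toNat_of_nonneg hN.le, Int.toNat_of_nonneg hSpos.le,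
            sq_abs]
          exact key
        exact_mod_cast this
      · refine ⟨(a 0).natAbs, (b 0).natAbs, ?_⟩
        have : ((S.toNat : ℕ) : ℤ) = (((a 0).natAbs ^ 2 + (b 0).natAbs ^ 2 : ℕ) : ℤ) := by
          push_cast [Int.natCast_natAbs, Int.toNat_of_nonneg hSpos.le, sq_abs]
          rfl
        exact_mod_cast this
    refine ⟨(x : ℤ), (y : ℤ), ?_⟩
    have := congrArg (fun m : ℕ => (m : ℤ)) hxy
    push_cast at this
    rwa [Int.toNat_of_nonneg hN.le] at this
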